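/- If k = 5m with m ≥ 2q and q ≥ 0, then va₃≡(K_{4k,4k,4k}) ≤ 12m − 3q. -/

import Mathlib

open SimpleGraph

/-- `G` has an equitable `(t,k)`-tree-coloring: a map `f : V → Fin t` whose color
classes have sizes differing by at most 1, and each color class induces a forest
(each component a tree) of maximum degree at most `k`. -/
def EqTreeColorable {V : Type} [Fintype V] (G : SimpleGraph V) (t k : ℕ) : Prop :=
  ∃ f : V → Fin t,
    (∀ i j : Fin t, ({v | f v = i} : Set V).ncard ≤ ({v | f v = j} : Set V).ncard + 1) ∧
    (∀ i : Fin t, (G.induce {v | f v = i}).IsAcyclic) ∧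
    (∀ i : Fin t, ∀ v, ((G.induce {v | f v = i}).neighborSet v).ncard ≤ k)

/-- The strong equitable vertex `k`-arboricity: the least `t` such that `G` has an
equitable `(t',k)`-tree-coloring for every `t' ≥ t`. -/
noncomputable def vaStrong {V : Type} [Fintype V] (G : SimpleGraph V) (k : ℕ) : ℕ :=
  sInf {t | ∀ t', t ≤ t' → EqTreeColorable G t' k}

/-- The complete tripartite graph `K_{n,n,n}`. -/
def K3 (n : ℕ) : SimpleGraph (Σ _ : Fin 3, Fin n) :=
  completeMultipartiteGraph (fun _ => Fin n)

lemma loop_isPath_eq_nil {V : Type*} {G : SimpleGraph V} {x : V} (p : G.Walk x x)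
    (hp : p.IsPath) : p = Walk.nil := by
  cases p with
  | nil => rfl
  | cons h q =>
    rw [Walk.cons_isPath_iff] at hp
    exact absurd (Walk.end_mem_support q) hp.2

lemma star_acyclic {V : Type*} {G : SimpleGraph V} (x : V)
    (h : ∀ u v, G.Adj u v → u = x ∨ v = x) : G.IsAcyclic := by
  classical
  intro v c hc
  have hx : x ∈ c.support := by
    cases c with
    | nil => exact absurd hc (by simp)
    | cons h1 p =>
      rcases h _ _ h1 with rfl | rfl
      · exact Walk.start_mem_support _
      · exact List.mem_cons_of_mem _ (Walk.start_mem_support p)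
  have hc' : (c.rotate x hx).IsCycle := hc.rotate hx
  generalize c.rotate x hx = c' at hc'
  cases c' with
  | nil => simp at hc'
  | cons h1 p =>
    cases p with
    | nil => exact h1.ne rfl
    | cons h2 q =>
      rcases h _ _ h2 with rfl | rfl
      · exact h1.ne rfl
      · have hpath : (Walk.cons h2 q).IsPath := ((Walk.cons_isCycle_iff _ _).1 hc').1
        have hq : q = Walk.nil := loop_isPath_eq_nil q hpath.of_cons
        subst hq
        have := hc'.three_le_length
        simp at this

lemma noedge_acyclic {V : Type*} {G : SimpleGraph V} (h : ∀ u v, ¬ G.Adj u v) : G.IsAcyclic := by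
  intro v c hc
  cases c with
  | nil => simp at hc
  | cons h1 p => exact h _ _ h1

lemma dicho (n L A : ℕ) (hn : 6 ≤ n) (hL : L ≤ n) (hA3 : A + L ≤ 3*n)
    (h1 : A + L ≤ n ∨ n ≤ A ∨ ((n = A + 1 ∨ n + 1 = A + L) ∧ L ≤ 4))
    (h2 : A + L ≤ 2*n ∨ 2*n ≤ A ∨ ((2*n = A + 1 ∨ 2*n + 1 = A + L) ∧ L ≤ 4)) :
    (∃ p, ∀ y, A ≤ y → y < A + L → y / n = p) ∨
    (∃ x0, A ≤ x0 ∧ x0 < A + L ∧ L ≤ 4 ∧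
      ∃ p, ∀ y, A ≤ y → y < A + L → y ≠ x0 → y / n = p) := by
  have hn0 : 0 < n := by omega
  rcases Nat.eq_zero_or_pos L with rfl | hLpos
  · exact Or.inl ⟨0, fun y hy hy' => by omega⟩
  by_cases c1 : A + L ≤ n
  · exact Or.inl ⟨0, fun y hy hy' => Nat.div_eq_of_lt (by omega)⟩
  by_cases c2 : n ≤ A
  · by_cases c3 : A + L ≤ 2*n
    · refine Or.inl ⟨1, fun y hy hy' => ?_⟩
      exact Nat.div_eq_of_lt_le (by omega) (by omega)
    · -- 2n interior or 2n ≤ A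
      rcases h2 with h2 | h2 | ⟨h2, hL4⟩
      · omega
      · refine Or.inl ⟨2, fun y hy hy' => ?_⟩
        exact Nat.div_eq_of_lt_le (by omega) (by omega)
      · rcases h2 with h2 | h2
        · -- 2n = A+1 : center A, rest in part 2
          refine Or.inr ⟨A, by omega, by omega, hL4, 2, fun y hy hy' hne => ?_⟩
          exact Nat.div_eq_of_lt_le (by omega) (by omega)
        · -- 2n+1 = A+L : center A+L-1 = 2n, rest in part 1
          refine Or.inr ⟨2*n, by omega, by omega, hL4, 1, fun y hy hy' hne => ?_⟩
          exact Nat.div_eq_of_lt_le (by omega) (by omega)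
  · -- A < n < A + L : n interior
    rcases h1 with h1 | h1 | ⟨h1, hL4⟩
    · omega
    · omega
    · rcases h1 with h1 | h1
      · refine Or.inr ⟨A, by omega, by omega, hL4, 1, fun y hy hy' hne => ?_⟩
        exact Nat.div_eq_of_lt_le (by omega) (by omega)
      · refine Or.inr ⟨n, by omega, by omega, hL4, 0, fun y hy hy' hne => ?_⟩
        exact Nat.div_eq_of_lt (by omega)


lemma build (n t' : ℕ) (hn : 6 ≤ n) (sz : ℕ → ℕ)
    (hsum : (Finset.range t').sum sz = 3*n)
    (heq : ∀ c, c < t' → ∀ c', c' < t' → sz c ≤ sz c' + 1)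
    (hszn : ∀ c, c < t' → sz c ≤ n)
    (hbd : ∀ c, c < t' → ∀ B, (B = n ∨ B = 2*n) →
      ((Finset.range c).sum sz + sz c ≤ B ∨ B ≤ (Finset.range c).sum sz ∨
       ((B = (Finset.range c).sum sz + 1 ∨ B + 1 = (Finset.range c).sum sz + sz c) ∧ sz c ≤ 4))) :
    EqTreeColorable (K3 n) t' 3 := by
  classical
  set st : ℕ → ℕ := fun c => (Finset.range c).sum sz with hst
  have ht' : 0 < t' := by
    rcases Nat.eq_zero_or_pos t' with rfl | h
    · simp at hsum; omega
    · exact h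
  have st_mono : ∀ {c c' : ℕ}, c ≤ c' → st c ≤ st c' := by
    intro c c' hcc
    exact Finset.sum_le_sum_of_subset (Finset.range_subset_range.2 hcc)
  have st_succ : ∀ c, st (c+1) = st c + sz c := by
    intro c; exact Finset.sum_range_succ _ _
  have st_top : st t' = 3*n := hsum
  set cO : ℕ → ℕ := fun x => Nat.findGreatest (fun c => st c ≤ x) (t' - 1) with hcO
  have cO_lt : ∀ x, cO x < t' := fun x => lt_of_le_of_lt (Nat.findGreatest_le _) (by omega)
  have key : ∀ x, x < 3*n → ∀ c, c < t' → (cO x = c ↔ st c ≤ x ∧ x < st (c+1)) := by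
    intro x hx c hc
    constructor
    · rintro rfl
      have hspec : st (cO x) ≤ x :=
        Nat.findGreatest_spec (P := fun c => st c ≤ x) (n := t' - 1) (Nat.zero_le _)
          (by simp [hst])
      refine ⟨hspec, ?_⟩
      by_cases hcc : cO x + 1 ≤ t' - 1
      · have hgr := Nat.findGreatest_is_greatest (P := fun c => st c ≤ x)
          (n := t' - 1) (k := cO x + 1) (show cO x < cO x + 1 by omega) hcc
        omega
      · have h1 : cO x = t' - 1 := le_antisymm (Nat.findGreatest_le _) (by omega)
        have h2 : st (cO x + 1) = 3*n := by rw [h1, show t' - 1 + 1 = t' by omega, st_top]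
        omega
    · rintro ⟨h1, h2⟩
      have hge : c ≤ cO x := Nat.le_findGreatest (by omega) h1
      by_contra hne
      have hlt : c + 1 ≤ cO x := by omega
      have hs1 : st (cO x) ≤ x :=
        Nat.findGreatest_spec (P := fun c => st c ≤ x) (n := t' - 1) (Nat.zero_le _)
          (by simp [hst])
      have := st_mono hlt
      omega
  set idx : (Σ _ : Fin 3, Fin n) → ℕ := fun v => n * v.1.val + v.2.val with hidx
  have idx_lt : ∀ v, idx v < 3*n := by
    rintro ⟨p, j⟩
    have hp : p.val ≤ 2 := by omega
    have hj := j.isLt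
    have hmul : n * p.val ≤ n * 2 := Nat.mul_le_mul_left _ hp
    simp only [hidx]; omega
  have idx_div : ∀ v, idx v / n = v.1.val := by
    rintro ⟨p, j⟩
    simp only [hidx]
    rw [Nat.mul_add_div (by omega)]
    rw [Nat.div_eq_of_lt j.isLt]
    omega
  have idx_inj : Function.Injective idx := by
    rintro ⟨p, j⟩ ⟨p', j'⟩ h
    have h1 : p.val = p'.val := by
      have e1 := idx_div ⟨p, j⟩
      have e2 := idx_div ⟨p', j'⟩
      rw [h] at e1
      exact e1.symm.trans e2
    have h2 : j.val = j'.val := by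
      simp only [hidx] at h
      rw [h1] at h
      exact Nat.add_left_cancel h
    exact Sigma.ext (Fin.ext h1) (heq_of_eq (Fin.ext h2))
  set fc : (Σ _ : Fin 3, Fin n) → Fin t' := fun v => ⟨cO (idx v), cO_lt _⟩ with hfc
  have hSeq : ∀ i : Fin t', {v | fc v = i}
      = idx ⁻¹' (Set.Ico (st i.val) (st i.val + sz i.val)) := by
    intro i
    ext v
    simp only [Set.mem_setOf_eq, Set.mem_preimage, Set.mem_Ico, hfc, Fin.ext_iff]
    rw [key (idx v) (idx_lt v) i.val i.isLt, ← st_succ]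
  have hScard : ∀ i : Fin t', ({v | fc v = i} : Set _).ncard = sz i.val := by
    intro i
    rw [hSeq i]
    have himg : idx '' (idx ⁻¹' (Set.Ico (st i.val) (st i.val + sz i.val)))
        = Set.Ico (st i.val) (st i.val + sz i.val) := by
      apply Set.image_preimage_eq_of_subset
      intro y hy
      simp only [Set.mem_Ico] at hy
      have hy3 : y < 3*n := by
        have h1 : st i.val + sz i.val = st (i.val + 1) := (st_succ _).symm
        have h2 : st (i.val+1) ≤ st t' := st_mono (by omega)
        omega
      refine ⟨⟨⟨y / n, Nat.div_lt_of_lt_mul (by omega)⟩, ⟨y % n, Nat.mod_lt _ (by omega)⟩⟩, ?_⟩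
      simp only [hidx]; exact Nat.div_add_mod y n
    rw [← Set.ncard_image_of_injective _ idx_inj, himg]
    rw [← Nat.card_coe_set_eq, ← Finset.coe_Ico, Nat.card_coe_set_eq,
      Set.ncard_coe_finset, Nat.card_Ico]
    omega
  have hstruct : ∀ i : Fin t',
      (∀ u v : (Σ _ : Fin 3, Fin n), u ∈ {v | fc v = i} → v ∈ {v | fc v = i} → u.1 = v.1) ∨
      (∃ x, x ∈ {v | fc v = i} ∧ sz i.val ≤ 4 ∧
        ∀ u v : (Σ _ : Fin 3, Fin n), u ∈ {v | fc v = i} → v ∈ {v | fc v = i} →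
          u ≠ x → v ≠ x → u.1 = v.1) := by
    intro i
    have hA3 : st i.val + sz i.val ≤ 3*n := by
      have h1 : st i.val + sz i.val = st (i.val + 1) := (st_succ _).symm
      have h2 : st (i.val+1) ≤ st t' := st_mono (by omega)
      omega
    rcases dicho n (sz i.val) (st i.val) hn (hszn _ i.isLt) hA3
      (hbd i.val i.isLt n (Or.inl rfl)) (hbd i.val i.isLt (2*n) (Or.inr rfl)) with
      ⟨p, hp⟩ | ⟨x0, hx1, hx2, hx3, p, hp⟩
    · left
      intro u v hu hv
      rw [hSeq i] at hu hv
      simp only [Set.mem_preimage, Set.mem_Ico] at hu hv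
      have e1 : u.1.val = p := by rw [← idx_div u]; exact hp _ hu.1 hu.2
      have e2 : v.1.val = p := by rw [← idx_div v]; exact hp _ hv.1 hv.2
      exact Fin.ext (e1.trans e2.symm)
    · right
      refine ⟨⟨⟨x0 / n, Nat.div_lt_of_lt_mul (by omega)⟩, ⟨x0 % n, Nat.mod_lt _ (by omega)⟩⟩, ?_, hx3, ?_⟩
      · rw [hSeq i]
        simp only [Set.mem_preimage, Set.mem_Ico, hidx]
        rw [Nat.div_add_mod x0 n]
        exact ⟨hx1, hx2⟩
      · intro u v hu hv hun hvn
        rw [hSeq i] at hu hv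
        simp only [Set.mem_preimage, Set.mem_Ico] at hu hv
        have hidxx : idx ⟨⟨x0 / n, Nat.div_lt_of_lt_mul (by omega)⟩, ⟨x0 % n, Nat.mod_lt _ (by omega)⟩⟩ = x0 := by
          simp only [hidx]; exact Nat.div_add_mod x0 n
        have e1 : u.1.val = p := by
          rw [← idx_div u]
          refine hp _ hu.1 hu.2 fun hcon => hun (idx_inj (by rw [hcon, hidxx]))
        have e2 : v.1.val = p := by
          rw [← idx_div v]
          refine hp _ hv.1 hv.2 fun hcon => hvn (idx_inj (by rw [hcon, hidxx]))
        exact Fin.ext (e1.trans e2.symm)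
  have hadj_iff : ∀ (S : Set (Σ _ : Fin 3, Fin n)) (u v : ↥S),
      ((K3 n).induce S).Adj u v ↔ (u : Σ _ : Fin 3, Fin n).1 ≠ (v : Σ _ : Fin 3, Fin n).1 := by
    intro S u v
    simp [K3, completeMultipartiteGraph]
  refine ⟨fc, ?_, ?_, ?_⟩
  · intro i j
    rw [hScard i, hScard j]
    exact heq i.val i.isLt j.val j.isLt
  · intro i
    rcases hstruct i with hA | ⟨x, hxS, hx4, hB⟩
    · apply noedge_acyclic
      rintro ⟨u, hu⟩ ⟨v, hv⟩ hadj
      rw [hadj_iff] at hadj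
      exact hadj (hA u v hu hv)
    · apply star_acyclic (⟨x, hxS⟩ : {v | fc v = i})
      rintro ⟨u, hu⟩ ⟨v, hv⟩ hadj
      rw [hadj_iff] at hadj
      by_cases h1 : u = x
      · left; exact Subtype.ext h1
      by_cases h2 : v = x
      · right; exact Subtype.ext h2
      exact absurd (hB u v hu hv h1 h2) hadj
  · intro i v
    rcases hstruct i with hA | ⟨x, hxS, hx4, hB⟩
    · have hempty : ((K3 n).induce {v | fc v = i}).neighborSet v = ∅ := by
        ext u
        simp only [mem_neighborSet, Set.mem_empty_iff_false, iff_false]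
        intro hadj
        rw [hadj_iff] at hadj
        exact hadj (hA v.val u.val v.2 u.2)
      rw [hempty]
      simp
    · have hsub : ((K3 n).induce {v | fc v = i}).neighborSet v ⊆ Set.univ \ {v} := by
        intro u hu
        refine ⟨Set.mem_univ _, ?_⟩
        simp only [Set.mem_singleton_iff]
        intro h
        subst h
        exact ((K3 n).induce _).irrefl hu
      have h1 : (((K3 n).induce {v | fc v = i}).neighborSet v).ncard
          ≤ (Set.univ \ {v} : Set ↥{v | fc v = i}).ncard :=
        Set.ncard_le_ncard hsub (Set.toFinite _)
      have h2 : (Set.univ \ {v} : Set ↥{v | fc v = i}).ncard = (Set.univ : Set ↥{v | fc v = i}).ncard - 1 :=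
        Set.ncard_diff_singleton_of_mem (Set.mem_univ v)
      have h3 : (Set.univ : Set ↥{v | fc v = i}).ncard = ({v | fc v = i} : Set _).ncard := by
        rw [Set.ncard_univ, Nat.card_coe_set_eq]
      have h4 := hScard i
      omega

lemma stf (a s : ℕ) : ∀ c, (Finset.range c).sum (fun j => if j < a then s+1 else s)
    = min c a * (s+1) + (c - min c a) * s := by
  intro c
  induction c with
  | zero => simp
  | succ c ih =>
    rw [Finset.sum_range_succ, ih]
    by_cases hc : c < a
    · have h1 : min c a = c := by omega
      have h2 : min (c+1) a = c+1 := by omega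
      simp only [if_pos hc, h1, h2, Nat.sub_self]
      ring
    · have h1 : min c a = a := by omega
      have h2 : min (c+1) a = a := by omega
      have h3 : c + 1 - a = (c - a) + 1 := by omega
      simp only [if_neg hc, h1, h2, h3]
      ring

lemma consI (n t' : ℕ) (hn : 20 ≤ n) (h4 : 4 ∣ n) (h5 : 5 ∣ n) (hts : 3*n < 5*t') :
    EqTreeColorable (K3 n) t' 3 := by
  have ht' : 0 < t' := by omega
  obtain ⟨s, a, hdm, halt, hs4⟩ : ∃ s a, t' * s + a = 3*n ∧ a < t' ∧ s ≤ 4 := by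
    refine ⟨3*n/t', 3*n%t', Nat.div_add_mod _ _, Nat.mod_lt _ ht', ?_⟩
    by_contra hgt
    push_neg at hgt
    have h1 : t' * 5 ≤ t' * (3*n/t') := Nat.mul_le_mul_left _ (by omega)
    have h2 := Nat.div_add_mod (3*n) t'
    have h3 := Nat.mod_lt (3*n) ht'
    omega
  refine build n t' (by omega) (fun c => if c < a then s+1 else s) ?_ ?_ ?_ ?_
  · rw [stf a s t']
    have hmin : min t' a = a := by omega
    rw [hmin]
    obtain ⟨d, hd⟩ : ∃ d, t' = a + d := ⟨t' - a, by omega⟩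
    rw [hd, Nat.add_sub_cancel_left]
    rw [hd] at hdm
    rw [← hdm]
    ring
  · intro c hc c' hc'
    split_ifs <;> omega
  · intro c hc
    split_ifs <;> omega
  · intro c hc B hB
    rw [stf a s c]
    rcases (show s = 0 ∨ s = 1 ∨ s = 2 ∨ s = 3 ∨ s = 4 by omega) with rfl|rfl|rfl|rfl|rfl <;>
      split_ifs <;> omega

set_option maxHeartbeats 2000000 in
lemma consII (n m t' r1 r2 r3 : ℕ) (hm : 1 ≤ m) (hn : n = 20*m)
    (hr1 : 3*r1 ≤ 2*m) (hr2 : 3*r2 ≤ 2*m) (hr3 : 3*r3 ≤ 2*m)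
    (hsr : t' + (r1+r2+r3) = 12*m) :
    EqTreeColorable (K3 n) t' 3 := by
  have stf2 : ∀ c, (Finset.range c).sum
      (fun j => if j < 5*r1 then 6 else if j < 4*m - r1 then 5
        else if j < 4*m - r1 + 5*r2 then 6 else if j < 8*m - (r1+r2) then 5
        else if j < 8*m - (r1+r2) + 5*r3 then 6 else 5)
      = (if c ≤ 5*r1 then 6*c
        else if c ≤ 4*m - r1 then 5*c + 5*r1
        else if c ≤ 4*m - r1 + 5*r2 then 20*m + 6*(c - (4*m - r1))
        else if c ≤ 8*m - (r1+r2) then 5*c + 5*(r1+r2)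
        else if c ≤ 8*m - (r1+r2) + 5*r3 then 40*m + 6*(c - (8*m - (r1+r2)))
        else 5*c + 5*(r1+r2+r3)) := by
    intro c
    induction c with
    | zero => simp
    | succ c ih =>
      rw [Finset.sum_range_succ, ih]
      split_ifs <;> omega
  refine build n t' (by omega)
    (fun j => if j < 5*r1 then 6 else if j < 4*m - r1 then 5
        else if j < 4*m - r1 + 5*r2 then 6 else if j < 8*m - (r1+r2) then 5
        else if j < 8*m - (r1+r2) + 5*r3 then 6 else 5) ?_ ?_ ?_ ?_
  · rw [stf2 t']
    split_ifs <;> omega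
  · intro c hc c' hc'
    split_ifs <;> omega
  · intro c hc
    split_ifs <;> omega
  · intro c hc B hB
    rw [stf2 c]
    split_ifs <;> omega

lemma emptyColor (n t : ℕ) (hn : n = 0) : EqTreeColorable (K3 n) t 3 := by
  subst hn
  refine ⟨fun v => v.2.elim0, ?_, ?_, ?_⟩
  · intro i j
    have h : ∀ i : Fin t, {v : (Σ _ : Fin 3, Fin 0) | v.2.elim0 = i} = ∅ := by
      intro i; ext v; exact v.2.elim0
    rw [h i, h j]
    omega
  · intro i v c hc
    exact v.val.snd.elim0
  · intro i v
    exact v.val.snd.elim0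

theorem stmt11 (k m q : ℕ) (hk : k = 5 * m) (hm : 2 * q ≤ m) :
    vaStrong (K3 (4 * k)) 3 ≤ 12 * m - 3 * q := by
  subst hk
  apply Nat.sInf_le
  simp only [Set.mem_setOf_eq]
  intro t' ht'
  rcases Nat.eq_zero_or_pos m with rfl | hm1
  · exact emptyColor _ _ (by norm_num)
  by_cases htt : t' ≤ 12*m
  · have haux : 12*m - t' ≤ 3*((2*m)/3) := by omega
    obtain ⟨r1, r2, r3, h1, h2, h3, h4⟩ : ∃ r1 r2 r3,
        3*r1 ≤ 2*m ∧ 3*r2 ≤ 2*m ∧ 3*r3 ≤ 2*m ∧ t' + (r1+r2+r3) = 12*m := by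
      refine ⟨min (12*m - t') ((2*m)/3),
        min ((12*m - t') - min (12*m - t') ((2*m)/3)) ((2*m)/3),
        (12*m - t') - min (12*m - t') ((2*m)/3)
          - min ((12*m - t') - min (12*m - t') ((2*m)/3)) ((2*m)/3),
        by omega, by omega, by omega, by omega⟩
    exact consII (4*(5*m)) m t' r1 r2 r3 hm1 (by ring) h1 h2 h3 h4
  · exact consI (4*(5*m)) t' (by omega) (by omega) (by omega) (by omega)
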